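/- Let ε > 0 and let (u, m) be a classical solution of the discounted MFG system. Then the integral identity ∫_{T^d} ( (1+m)/2 )|Du|² + m g(m) dx = ∫_{T^d} (m − 1)V + g(m) dx holds. -/

import Mathlib

open MeasureTheory Set

noncomputable def pd (d : ℕ) (i : Fin d) (f : (Fin d → ℝ) → ℝ) : (Fin d → ℝ) → ℝ :=
  fun x => fderiv ℝ f x (Pi.single i 1)

noncomputable def gradSq (d : ℕ) (u : (Fin d → ℝ) → ℝ) (x : Fin d → ℝ) : ℝ :=
  ∑ i, pd d i u x ^ 2

noncomputable def divUp (d : ℕ) (m u : (Fin d → ℝ) → ℝ) (x : Fin d → ℝ) : ℝ :=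
  ∑ i, pd d i (fun y => m y * pd d i u y) x

/-- `f` is `ℤ^d`-periodic, i.e. a function on the flat torus `T^d`. -/
def ZPer (d : ℕ) (f : (Fin d → ℝ) → ℝ) : Prop :=
  ∀ (x : Fin d → ℝ) (k : Fin d → ℤ), f (x + fun i => (k i : ℝ)) = f x

/-- `f` has finite `α`-Hölder seminorm. -/
def HolderSemi (α : ℝ) {E : Type*} [PseudoMetricSpace E] (f : E → ℝ) : Prop :=
  ∃ C : ℝ, 0 ≤ C ∧ ∀ x y, |f x - f y| ≤ C * dist x y ^ α

/-- `f` is of class `C^{1,α}`. -/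
def C1Hold (d : ℕ) (α : ℝ) (f : (Fin d → ℝ) → ℝ) : Prop :=
  ContDiff ℝ 1 f ∧ ∀ i, HolderSemi α (pd d i f)

/-- `f` is of class `C^{2,α}`. -/
def C2Hold (d : ℕ) (α : ℝ) (f : (Fin d → ℝ) → ℝ) : Prop :=
  ContDiff ℝ 2 f ∧ ∀ i j, HolderSemi α (pd d i (pd d j f))

/-- `f` is locally `α`-Hölder on `s`. -/
def LocHolderOn (α : ℝ) (f : ℝ → ℝ) (s : Set ℝ) : Prop :=
  ∀ K : Set ℝ, IsCompact K → K ⊆ s →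
    ∃ C : ℝ, 0 ≤ C ∧ ∀ x ∈ K, ∀ y ∈ K, |f x - f y| ≤ C * dist x y ^ α

/-- Standing hypotheses on `g`: strictly increasing and continuous on `[0,∞)`,
of class `C^{1,α}` on `(0,∞)`. -/
def Ghyp (α : ℝ) (g : ℝ → ℝ) : Prop :=
  StrictMonoOn g (Ici 0) ∧ ContinuousOn g (Ici 0) ∧
    DifferentiableOn ℝ g (Ioi 0) ∧ LocHolderOn α (deriv g) (Ioi 0)

/-- Standing hypotheses on `V`: a `C^{1,α}` function on the torus. -/
def Vhyp (d : ℕ) (α : ℝ) (V : (Fin d → ℝ) → ℝ) : Prop :=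
  ZPer d V ∧ C1Hold d α V

/-- The oscillation of `V` over the torus. -/
noncomputable def oscV (d : ℕ) (V : (Fin d → ℝ) → ℝ) : ℝ :=
  sSup (V '' Icc (0 : Fin d → ℝ) 1) - sInf (V '' Icc (0 : Fin d → ℝ) 1)

/-- Assumption (A1): `g⁻¹(g(1) − osc V) > 0`, i.e. `g(1) − osc V` is attained by `g` on `(0,∞)`. -/
def A1 (d : ℕ) (g : ℝ → ℝ) (V : (Fin d → ℝ) → ℝ) : Prop :=
  g 1 - oscV d V ∈ g '' Ioi (0 : ℝ)

/-- Assumption (A2). -/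
def A2 (g : ℝ → ℝ) : Prop :=
  ∃ C₁ C₂ β : ℝ, 0 < C₁ ∧ 0 < C₂ ∧
    (∀ z : ℝ, 0 < z → C₁ * z ^ β ≤ deriv g z) ∧
    (∀ z : ℝ, 0 ≤ z → g z ≤ C₂ + z * g z)

/-- A classical solution `(u, m)` of the discounted MFG system
`ε u + |Du|²/2 + V = g(m)`, `ε m − div(m Du) = ε` on `T^d`. -/
structure DiscSol (d : ℕ) (α : ℝ) (g : ℝ → ℝ) (V : (Fin d → ℝ) → ℝ) (ε : ℝ)
    (u m : (Fin d → ℝ) → ℝ) : Prop where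
  per_u : ZPer d u
  per_m : ZPer d m
  reg_u : C2Hold d α u
  reg_m : C1Hold d α m
  m_nonneg : ∀ x, 0 ≤ m x
  hj : ∀ x, ε * u x + (1 / 2) * gradSq d u x + V x = g (m x)
  fp : ∀ x, ε * m x - divUp d m u x = ε

/-- A classical solution `(u, m, H̄)` of the ergodic MFG system
`|Du|²/2 + V = g(m) + H̄`, `−div(m Du) = 0`, `m ≥ 0`, `∫ m = 1` on `T^d`. -/
structure ErgSol (d : ℕ) (α : ℝ) (g : ℝ → ℝ) (V : (Fin d → ℝ) → ℝ)
    (u m : (Fin d → ℝ) → ℝ) (H : ℝ) : Prop where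
  per_u : ZPer d u
  per_m : ZPer d m
  reg_u : C2Hold d α u
  reg_m : C1Hold d α m
  m_nonneg : ∀ x, 0 ≤ m x
  m_mass : (∫ x in Icc (0 : Fin d → ℝ) 1, m x) = 1
  hj : ∀ x, (1 / 2) * gradSq d u x + V x = g (m x) + H
  fp : ∀ x, divUp d m u x = 0


lemma contDiff_pd' (d : ℕ) (i : Fin d) (u : (Fin d → ℝ) → ℝ) (hu : ContDiff ℝ 2 u) :
    ContDiff ℝ 1 (pd d i u) := by
  have h1 : ContDiff ℝ 1 (fderiv ℝ u) := hu.fderiv_right (by norm_num)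
  exact (ContinuousLinearMap.apply ℝ ℝ (Pi.single i 1)).contDiff.comp h1

lemma continuous_pd' (d : ℕ) (i : Fin d) (f : (Fin d → ℝ) → ℝ) (hf : ContDiff ℝ 1 f) :
    Continuous (pd d i f) :=
  (ContinuousLinearMap.apply ℝ ℝ (Pi.single i 1)).continuous.comp (hf.continuous_fderiv one_ne_zero)

lemma zper_pd' (d : ℕ) (i : Fin d) (f : (Fin d → ℝ) → ℝ) (hf : Differentiable ℝ f)
    (hper : ZPer d f) : ZPer d (pd d i f) := by
  intro x k
  have hfe : (fun y : Fin d → ℝ => f (y + fun i => (k i : ℝ))) = f := by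
    funext y; exact hper y k
  have h1 : HasFDerivAt (fun y : Fin d → ℝ => f (y + fun i => (k i : ℝ)))
      (fderiv ℝ f (x + fun i => (k i : ℝ))) x := by
    have := (hf (x + fun i => (k i : ℝ))).hasFDerivAt.comp x
      ((hasFDerivAt_id x).add_const (fun i => (k i : ℝ)))
    simp at this; exact this
  rw [hfe] at h1
  simp only [pd, h1.fderiv]

lemma key_div (n : ℕ) (u m : (Fin (n+1) → ℝ) → ℝ) (hu : ContDiff ℝ 2 u) (hm : ContDiff ℝ 1 m)
    (hup : ZPer (n+1) u) (hmp : ZPer (n+1) m) :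
    (∫ x in Icc (0 : Fin (n+1) → ℝ) 1,
      (m x * gradSq (n+1) u x + u x * divUp (n+1) m u x)) = 0 := by
  set F : (Fin (n+1) → ℝ) → Fin (n+1) → ℝ := fun x i => u x * (m x * pd (n+1) i u x) with hF
  have hu1 : ContDiff ℝ 1 u := hu.of_le one_le_two
  have hpdu : ∀ i, ContDiff ℝ 1 (pd (n+1) i u) := fun i => contDiff_pd' (n+1) i u hu
  have hmpdu : ∀ i, ContDiff ℝ 1 (fun y => m y * pd (n+1) i u y) :=
    fun i => hm.mul (hpdu i)
  have hFi : ∀ i, ContDiff ℝ 1 (fun x => F x i) :=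
    fun i => hu1.mul (hmpdu i)
  have hFc : ContDiff ℝ 1 F := contDiff_pi.2 hFi
  have hFper : ∀ (y : Fin (n+1) → ℝ) (k : Fin (n+1) → ℤ),
      F (y + fun j => (k j : ℝ)) = F y := by
    intro y k; funext j
    simp only [hF]
    rw [hup y k, hmp y k, zper_pd' (n+1) j u (hu.differentiable two_ne_zero) hup y k]
  have hle : (0 : Fin (n+1) → ℝ) ≤ 1 := fun _ => zero_le_one
  have Hd : ∀ x ∈ (Set.pi univ fun i => Ioo ((0:Fin (n+1) → ℝ) i) ((1:Fin (n+1) → ℝ) i)) \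
        (∅ : Set (Fin (n+1) → ℝ)),
      HasFDerivAt F (fderiv ℝ F x) x :=
    fun x _ => (hFc.differentiable one_ne_zero x).hasFDerivAt
  have hdivc : Continuous fun x => ∑ i, fderiv ℝ F x (Pi.single i 1) i := by
    refine continuous_finset_sum _ fun i _ => ?_
    exact (continuous_apply i).comp
      ((ContinuousLinearMap.apply ℝ (Fin (n+1) → ℝ) (Pi.single i 1)).continuous.comp
        (hFc.continuous_fderiv one_ne_zero))
  have Hi : IntegrableOn (fun x => ∑ i, fderiv ℝ F x (Pi.single i 1) i)
      (Icc (0 : Fin (n+1) → ℝ) 1) := hdivc.integrableOn_Icc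
  have hdivthm := integral_divergence_of_hasFDerivAt_off_countable
    (0 : Fin (n+1) → ℝ) (1 : Fin (n+1) → ℝ) hle F (fun x => fderiv ℝ F x) ∅ countable_empty
    hFc.continuous.continuousOn Hd Hi
  have hbd : ∀ i : Fin (n+1),
      (∫ x in Icc ((0:Fin (n+1) → ℝ) ∘ i.succAbove) ((1:Fin (n+1) → ℝ) ∘ i.succAbove),
          F (i.insertNth ((1:Fin (n+1) → ℝ) i) x) i)
        - ∫ x in Icc ((0:Fin (n+1) → ℝ) ∘ i.succAbove) ((1:Fin (n+1) → ℝ) ∘ i.succAbove),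
          F (i.insertNth ((0:Fin (n+1) → ℝ) i) x) i = 0 := by
    intro i
    have hins : ∀ x : Fin n → ℝ, i.insertNth ((1:Fin (n+1) → ℝ) i) x
        = i.insertNth ((0:Fin (n+1) → ℝ) i) x
          + fun j => (((Pi.single i 1 : Fin (n+1) → ℤ)) j : ℝ) := by
      intro x; funext j
      rcases eq_or_ne j i with rfl | hj
      · simp
      · obtain ⟨k, rfl⟩ := Fin.exists_succAbove_eq hj
        simp [Pi.single_eq_of_ne (Fin.succAbove_ne i k)]
    have : ∀ x : Fin n → ℝ, F (i.insertNth ((1:Fin (n+1) → ℝ) i) x) i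
        = F (i.insertNth ((0:Fin (n+1) → ℝ) i) x) i := by
      intro x; rw [hins x, hFper]
    simp only [this, sub_self]
  rw [Finset.sum_congr rfl (fun i _ => hbd i), Finset.sum_const, smul_zero] at hdivthm
  have hpt : ∀ x, (∑ i, fderiv ℝ F x (Pi.single i 1) i)
      = m x * gradSq (n+1) u x + u x * divUp (n+1) m u x := by
    intro x
    have hfp : fderiv ℝ F x = ContinuousLinearMap.pi
        (fun i => fderiv ℝ (fun y => u y * (m y * pd (n+1) i u y)) x) :=
      fderiv_pi (fun i => ((hFi i).differentiable one_ne_zero x))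
    have hterm : ∀ i : Fin (n+1), fderiv ℝ F x (Pi.single i 1) i
        = u x * pd (n+1) i (fun y => m y * pd (n+1) i u y) x
          + (m x * pd (n+1) i u x) * pd (n+1) i u x := by
      intro i
      rw [hfp, ContinuousLinearMap.pi_apply,
        fderiv_fun_mul ((hu1.differentiable one_ne_zero x)) ((hmpdu i).differentiable one_ne_zero x)]
      simp [pd]
    rw [Finset.sum_congr rfl fun i _ => hterm i, Finset.sum_add_distrib, ← Finset.mul_sum]
    have : ∑ i : Fin (n+1), (m x * pd (n+1) i u x) * pd (n+1) i u x
        = m x * gradSq (n+1) u x := by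
      rw [gradSq, Finset.mul_sum]
      exact Finset.sum_congr rfl fun i _ => by ring
    rw [this, divUp]; ring
  have heq : (fun x => m x * gradSq (n+1) u x + u x * divUp (n+1) m u x)
      = fun x => ∑ i, fderiv ℝ F x (Pi.single i 1) i := funext fun x => (hpt x).symm
  rw [heq, hdivthm]

lemma key_div' : ∀ (d : ℕ) (u m : (Fin d → ℝ) → ℝ), ContDiff ℝ 2 u → ContDiff ℝ 1 m →
    ZPer d u → ZPer d m →
    (∫ x in Icc (0 : Fin d → ℝ) 1,
      (m x * gradSq d u x + u x * divUp d m u x)) = 0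
  | 0, u, m, _, _, _, _ => by simp [gradSq, divUp]
  | (n+1), u, m, hu, hm, hup, hmp => key_div n u m hu hm hup hmp

theorem stmt13 (d : ℕ) (α : ℝ) (hα0 : 0 < α) (hα1 : α < 1)
    (g : ℝ → ℝ) (V : (Fin d → ℝ) → ℝ) (hg : Ghyp α g) (hV : Vhyp d α V)
    (ε : ℝ) (hε : 0 < ε) (u m : (Fin d → ℝ) → ℝ)
    (hsol : DiscSol d α g V ε u m) :
    (∫ x in Icc (0 : Fin d → ℝ) 1,
        ((1 + m x) / 2 * gradSq d u x + m x * g (m x)))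
      = ∫ x in Icc (0 : Fin d → ℝ) 1, ((m x - 1) * V x + g (m x)) := by
  have hu2 : ContDiff ℝ 2 u := hsol.reg_u.1
  have hm1 : ContDiff ℝ 1 m := hsol.reg_m.1
  have key := key_div' d u m hu2 hm1 hsol.per_u hsol.per_m
  have hpt : ∀ x, (1 + m x) / 2 * gradSq d u x + m x * g (m x)
      = ((m x - 1) * V x + g (m x)) + (m x * gradSq d u x + u x * divUp d m u x) := by
    intro x
    have h1 := hsol.hj x
    have h2 := hsol.fp x
    linear_combination (1 - m x) * h1 + u x * h2
  -- integrability
  have hgradc : Continuous (gradSq d u) := by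
    refine continuous_finset_sum _ fun i _ => ?_
    exact (continuous_pd' d i u (hu2.of_le one_le_two)).pow 2
  have hdivc : Continuous (divUp d m u) := by
    refine continuous_finset_sum _ fun i _ => ?_
    exact continuous_pd' d i _ (hm1.mul (contDiff_pd' d i u hu2))
  have hI2 : IntegrableOn (fun x => m x * gradSq d u x + u x * divUp d m u x)
      (Icc (0 : Fin d → ℝ) 1) :=
    (((hm1.continuous.mul hgradc).add ((hu2.continuous).mul hdivc)).integrableOn_Icc)
  have hgm : ContinuousOn (fun x => g (m x)) (Icc (0 : Fin d → ℝ) 1) :=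
    hg.2.1.comp hm1.continuous.continuousOn (fun x _ => hsol.m_nonneg x)
  have hI1 : IntegrableOn (fun x => (m x - 1) * V x + g (m x))
      (Icc (0 : Fin d → ℝ) 1) := by
    refine ContinuousOn.integrableOn_compact isCompact_Icc ?_
    exact (((hm1.continuous.sub continuous_const).mul hV.2.1.continuous).continuousOn).add hgm
  calc (∫ x in Icc (0 : Fin d → ℝ) 1,
        ((1 + m x) / 2 * gradSq d u x + m x * g (m x)))
      = ∫ x in Icc (0 : Fin d → ℝ) 1,
          (((m x - 1) * V x + g (m x)) + (m x * gradSq d u x + u x * divUp d m u x)) := by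
        simp only [hpt]
    _ = (∫ x in Icc (0 : Fin d → ℝ) 1, ((m x - 1) * V x + g (m x)))
        + ∫ x in Icc (0 : Fin d → ℝ) 1, (m x * gradSq d u x + u x * divUp d m u x) :=
        integral_add hI1 hI2
    _ = ∫ x in Icc (0 : Fin d → ℝ) 1, ((m x - 1) * V x + g (m x)) := by
        rw [key, add_zero]
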